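/- Let a, b > 0 be real numbers and 0 < ν, τ < 1. If (τ - ν)(b - a) > 0, then (a #_ν b - a !_ν b)/(ν(1-ν)) ≤ (a #_τ b - a !_τ b)/(τ(1-τ)). -/

import Mathlib

/-- The weighted harmonic mean of positive reals: `a !_t b = ((1-t)a⁻¹ + t b⁻¹)⁻¹`. -/
noncomputable def wharm (t a b : ℝ) : ℝ := ((1 - t) * a⁻¹ + t * b⁻¹)⁻¹

/-- The weighted geometric mean: `a #_t b = a^(1-t) * b^t`. -/
noncomputable def wgeom (t a b : ℝ) : ℝ := a ^ (1 - t) * b ^ t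

namespace Stmt13Aux

open Finset

noncomputable def cc (s : ℝ) (n : ℕ) : ℝ :=
  s ^ n / n.factorial - (1 - Real.exp (-s)) ^ n

noncomputable def SS (s : ℝ) (k : ℕ) : ℝ := ∑ n ∈ Finset.range k, cc s (n + 1)

lemma exp_tsum (x : ℝ) : Real.exp x = ∑' n : ℕ, x ^ n / n.factorial := by
  rw [Real.exp_eq_exp_ℝ, NormedSpace.exp_eq_tsum_div]

lemma u_pos {s : ℝ} (hs : 0 < s) : 0 < 1 - Real.exp (-s) := by
  have h : Real.exp (-s) < Real.exp 0 := Real.exp_lt_exp.mpr (by linarith)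
  rw [Real.exp_zero] at h; linarith

lemma u_lt_one (s : ℝ) : 1 - Real.exp (-s) < 1 := by
  have := Real.exp_pos (-s); linarith

/-- termwise factorial bound -/
lemma term_bound {s : ℝ} (hs : 0 ≤ s) (k i : ℕ) :
    s ^ (i + (k + 1)) / ((i + (k + 1)).factorial : ℝ)
      ≤ s ^ (k + 1) / ((k + 1).factorial : ℝ) * (s ^ i / (i.factorial : ℝ)) := by
  have hfac : ((i.factorial * (k + 1).factorial : ℕ) : ℝ)
      ≤ ((i + (k + 1)).factorial : ℝ) := by
    exact_mod_cast Nat.le_of_dvd (Nat.factorial_pos _)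
      (Nat.factorial_mul_factorial_dvd_factorial_add i (k + 1))
  have hpos : (0:ℝ) < ((i.factorial * (k + 1).factorial : ℕ) : ℝ) := by
    exact_mod_cast Nat.mul_pos (Nat.factorial_pos i) (Nat.factorial_pos (k + 1))
  have h1 : s ^ (i + (k + 1)) / ((i + (k + 1)).factorial : ℝ)
      ≤ s ^ (i + (k + 1)) / ((i.factorial * (k + 1).factorial : ℕ) : ℝ) := by
    gcongr
  refine h1.trans_eq ?_
  push_cast
  rw [pow_add]
  rw [div_mul_div_comm]
  ring

set_option maxHeartbeats 1000000 in
/-- tail of exp is at most `exp s * s^(k+1)/(k+1)!` -/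
lemma tail_le {s : ℝ} (hs : 0 ≤ s) (k : ℕ) :
    Real.exp s - ∑ n ∈ Finset.range (k + 1), s ^ n / n.factorial
      ≤ Real.exp s * (s ^ (k + 1) / ((k + 1).factorial : ℝ)) := by
  have hsum := Real.summable_pow_div_factorial s
  have htail := hsum.sum_add_tsum_nat_add (f := fun n => s ^ n / (n.factorial : ℝ)) (k + 1)
  have h1 : Real.exp s - ∑ n ∈ Finset.range (k + 1), s ^ n / n.factorial
      = ∑' i : ℕ, s ^ (i + (k + 1)) / ((i + (k + 1)).factorial : ℝ) := by
    rw [exp_tsum]; linarith [htail]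
  rw [h1]
  have hsum2 : Summable (fun i : ℕ => s ^ (i + (k + 1)) / ((i + (k + 1)).factorial : ℝ)) :=
    (summable_nat_add_iff (k + 1)).mpr hsum
  calc ∑' i : ℕ, s ^ (i + (k + 1)) / ((i + (k + 1)).factorial : ℝ)
      ≤ ∑' i : ℕ, s ^ (k + 1) / ((k + 1).factorial : ℝ) * (s ^ i / (i.factorial : ℝ)) :=
        hsum2.tsum_le_tsum (term_bound hs k) (hsum.mul_left _)
    _ = s ^ (k + 1) / ((k + 1).factorial : ℝ) * Real.exp s := by
        rw [tsum_mul_left, ← exp_tsum]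
    _ = Real.exp s * (s ^ (k + 1) / ((k + 1).factorial : ℝ)) := by ring

lemma geom_id {s : ℝ} (k : ℕ) :
    ∑ n ∈ Finset.range k, (1 - Real.exp (-s)) ^ (n + 1)
      = (Real.exp s - 1) * (1 - (1 - Real.exp (-s)) ^ k) := by
  induction k with
  | zero => simp
  | succ k ih =>
    rw [Finset.sum_range_succ, ih]
    have he : Real.exp (-s) * Real.exp s = 1 := by
      rw [← Real.exp_add]; simp
    have key : (1 - Real.exp (-s)) - (Real.exp s - 1) * Real.exp (-s) = 0 := by
      linear_combination (-1 : ℝ) * he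
    linear_combination ((1 - Real.exp (-s)) ^ k) * key

lemma tail_le_pow {s : ℝ} (hs : 0 < s) (k : ℕ) :
    Real.exp s - ∑ n ∈ Finset.range (k + 1), s ^ n / n.factorial
      ≤ (Real.exp s - 1) * (1 - Real.exp (-s)) ^ k := by
  induction k with
  | zero => simp [Finset.sum_range_one]
  | succ k ih =>
    have hA := tail_le hs.le k
    have hE := Real.exp_pos (-s)
    have he : Real.exp (-s) * Real.exp s = 1 := by
      rw [← Real.exp_add]; simp
    have hu0 : (0:ℝ) ≤ 1 - Real.exp (-s) := (u_pos hs).le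
    have hmul := mul_le_mul_of_nonneg_left hA hE.le
    -- e^{-s} * T k ≤ s^{k+1}/(k+1)!
    have h2 : Real.exp (-s) * (Real.exp s - ∑ n ∈ Finset.range (k + 1), s ^ n / n.factorial)
        ≤ s ^ (k + 1) / ((k + 1).factorial : ℝ) := by
      have hq : Real.exp (-s) * (Real.exp s * (s ^ (k + 1) / ((k + 1).factorial : ℝ)))
          = s ^ (k + 1) / ((k + 1).factorial : ℝ) := by
        rw [← mul_assoc, he, one_mul]
      linarith [hmul, hq]
    have hstep : Real.exp s - ∑ n ∈ Finset.range (k + 2), s ^ n / n.factorial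
        ≤ (1 - Real.exp (-s)) * (Real.exp s - ∑ n ∈ Finset.range (k + 1), s ^ n / n.factorial) := by
      rw [Finset.sum_range_succ]
      nlinarith [h2]
    calc Real.exp s - ∑ n ∈ Finset.range (k + 2), s ^ n / n.factorial
        ≤ (1 - Real.exp (-s)) * (Real.exp s - ∑ n ∈ Finset.range (k + 1), s ^ n / n.factorial) := hstep
      _ ≤ (1 - Real.exp (-s)) * ((Real.exp s - 1) * (1 - Real.exp (-s)) ^ k) :=
          mul_le_mul_of_nonneg_left ih hu0
      _ = (Real.exp s - 1) * (1 - Real.exp (-s)) ^ (k + 1) := by ring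

lemma SS_eq {s : ℝ} (k : ℕ) :
    SS s k = (∑ n ∈ Finset.range (k + 1), s ^ n / n.factorial) - 1
      - (Real.exp s - 1) * (1 - (1 - Real.exp (-s)) ^ k) := by
  unfold SS cc
  rw [Finset.sum_sub_distrib, geom_id]
  have h := Finset.sum_range_succ' (fun n => s ^ n / (n.factorial : ℝ)) k
  simp only [pow_zero, Nat.factorial_zero, Nat.cast_one, div_one] at h
  linarith [h]

lemma SS_nonneg {s : ℝ} (hs : 0 < s) (k : ℕ) : 0 ≤ SS s k := by
  rw [SS_eq]
  have h := tail_le_pow hs k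
  linarith

lemma SS_le {s : ℝ} (hs : 0 < s) (k : ℕ) : SS s k ≤ Real.exp s := by
  rw [SS_eq]
  have hP : ∑ n ∈ Finset.range (k + 1), s ^ n / n.factorial ≤ Real.exp s := by
    rw [exp_tsum]
    exact (Real.summable_pow_div_factorial s).sum_le_tsum _ (fun i _ => by positivity)
  have h1 : (0:ℝ) ≤ Real.exp s - 1 := by
    nlinarith [Real.add_one_le_exp s, hs]
  have h2 : (1 - Real.exp (-s)) ^ k ≤ 1 :=
    pow_le_one₀ (u_pos hs).le (u_lt_one s).le
  nlinarith [h1, h2, hP]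

lemma summable_G {s t : ℝ} (hs : 0 < s) (ht0 : 0 ≤ t) (ht1 : t < 1) :
    Summable (fun m : ℕ => SS s (m + 1) * t ^ m) := by
  apply Summable.of_nonneg_of_le
    (fun m => mul_nonneg (SS_nonneg hs _) (pow_nonneg ht0 m))
    (fun m => mul_le_mul_of_nonneg_right (SS_le hs _) (pow_nonneg ht0 m))
  exact (summable_geometric_of_lt_one ht0 ht1).mul_left _

lemma summable_G' {s t : ℝ} (hs : 0 < s) (ht0 : 0 ≤ t) (ht1 : t < 1) :
    Summable (fun m : ℕ => SS s m * t ^ m) := by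
  apply Summable.of_nonneg_of_le
    (fun m => mul_nonneg (SS_nonneg hs _) (pow_nonneg ht0 m))
    (fun m => mul_le_mul_of_nonneg_right (SS_le hs _) (pow_nonneg ht0 m))
  exact (summable_geometric_of_lt_one ht0 ht1).mul_left _

lemma key {s t : ℝ} (hs : 0 < s) (ht0 : 0 < t) (ht1 : t < 1) :
    Real.exp (t * s) - (1 - t * (1 - Real.exp (-s)))⁻¹
      = t * (1 - t) * ∑' m : ℕ, SS s (m + 1) * t ^ m := by
  set u := 1 - Real.exp (-s) with hu
  have hu0 : 0 < u := u_pos hs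
  have hu1 : u < 1 := u_lt_one s
  have htu0 : 0 ≤ t * u := by positivity
  have htu1 : t * u < 1 := by nlinarith
  have hsExp : Summable (fun n : ℕ => (t * s) ^ n / (n.factorial : ℝ)) :=
    Real.summable_pow_div_factorial _
  have hsGeo : Summable (fun n : ℕ => (t * u) ^ n) :=
    summable_geometric_of_lt_one htu0 htu1
  have hterm : ∀ n : ℕ, cc s n * t ^ n = (t * s) ^ n / (n.factorial : ℝ) - (t * u) ^ n := by
    intro n
    unfold cc
    rw [← hu, mul_pow, mul_pow]
    ring
  have hsCC : Summable (fun n : ℕ => cc s n * t ^ n) := by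
    apply Summable.congr (hsExp.sub hsGeo)
    intro n
    exact (hterm n).symm
  have hLHS : ∑' n : ℕ, cc s n * t ^ n = Real.exp (t * s) - (1 - t * u)⁻¹ := by
    calc ∑' n : ℕ, cc s n * t ^ n
        = ∑' n : ℕ, ((t * s) ^ n / (n.factorial : ℝ) - (t * u) ^ n) := tsum_congr hterm
      _ = (∑' n : ℕ, (t * s) ^ n / (n.factorial : ℝ)) - ∑' n : ℕ, (t * u) ^ n :=
          hsExp.tsum_sub hsGeo
      _ = Real.exp (t * s) - (1 - t * u)⁻¹ := by
          rw [← exp_tsum, tsum_geometric_of_lt_one htu0 htu1]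
  rw [← hLHS]
  set G := ∑' m : ℕ, SS s (m + 1) * t ^ m with hGdef
  have hG : Summable (fun m : ℕ => SS s (m + 1) * t ^ m) := summable_G hs ht0.le ht1
  have hSfun : Summable (fun m : ℕ => SS s m * t ^ m) := summable_G' hs ht0.le ht1
  have hshift : ∑' m : ℕ, SS s m * t ^ m = t * G := by
    rw [hSfun.tsum_eq_zero_add]
    have h0 : SS s 0 = 0 := by simp [SS]
    rw [h0]
    rw [hGdef, ← tsum_mul_left]
    rw [zero_mul, zero_add]
    apply tsum_congr
    intro m
    ring
  have hA : ∑' n : ℕ, SS s (n + 1) * t ^ (n + 1) = t * G := by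
    rw [hGdef, ← tsum_mul_left]
    apply tsum_congr
    intro m
    ring
  have hsum1 : Summable (fun n : ℕ => SS s (n + 1) * t ^ (n + 1)) := by
    apply Summable.congr (hG.mul_left t)
    intro n; ring
  have hsum2 : Summable (fun n : ℕ => SS s n * t ^ (n + 1)) := by
    apply Summable.congr (hSfun.mul_left t)
    intro n; ring
  have hB : ∑' n : ℕ, SS s n * t ^ (n + 1) = t * (t * G) := by
    calc ∑' n : ℕ, SS s n * t ^ (n + 1) = ∑' n : ℕ, t * (SS s n * t ^ n) := by
          apply tsum_congr; intro n; ring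
      _ = t * ∑' n : ℕ, SS s n * t ^ n := tsum_mul_left
      _ = t * (t * G) := by rw [hshift]
  have hCC0 : cc s 0 = 0 := by
    unfold cc; simp
  calc ∑' n : ℕ, cc s n * t ^ n
      = cc s 0 * t ^ 0 + ∑' n : ℕ, cc s (n + 1) * t ^ (n + 1) := hsCC.tsum_eq_zero_add
    _ = ∑' n : ℕ, (SS s (n + 1) * t ^ (n + 1) - SS s n * t ^ (n + 1)) := by
        rw [hCC0]
        rw [zero_mul, zero_add]
        apply tsum_congr
        intro n
        have : SS s (n + 1) - SS s n = cc s (n + 1) := by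
          unfold SS
          rw [Finset.sum_range_succ]
          ring
        rw [← this]
        ring
    _ = (∑' n : ℕ, SS s (n + 1) * t ^ (n + 1)) - ∑' n : ℕ, SS s n * t ^ (n + 1) :=
        hsum1.tsum_sub hsum2
    _ = t * G - t * (t * G) := by rw [hA, hB]
    _ = t * (1 - t) * G := by ring

lemma wgeom_eq {a b : ℝ} (ha : 0 < a) (hb : 0 < b) (t : ℝ) :
    wgeom t a b = a * Real.exp (t * Real.log (b / a)) := by
  unfold wgeom
  have h : a * Real.exp (t * Real.log (b / a))
      = Real.exp (Real.log a + t * (Real.log b - Real.log a)) := by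
    rw [Real.exp_add, Real.exp_log ha, Real.log_div (ne_of_gt hb) (ne_of_gt ha)]
  rw [Real.rpow_def_of_pos ha, Real.rpow_def_of_pos hb, h, ← Real.exp_add]
  congr 1
  ring

lemma wharm_eq {a b t : ℝ} (ha : 0 < a) (hb : 0 < b) (ht0 : 0 < t) (ht1 : t < 1) :
    wharm t a b = a * (1 - t * (1 - a / b))⁻¹ := by
  unfold wharm
  have hden : (1 - t) * a⁻¹ + t * b⁻¹ = (1 - t * (1 - a / b)) / a := by
    field_simp
    ring
  rw [hden, inv_div, div_eq_mul_inv]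

lemma main_lt {a b ν τ : ℝ} (ha : 0 < a) (hab : a < b)
    (hν0 : 0 < ν) (hν1 : ν < 1) (hτ0 : 0 < τ) (hτ1 : τ < 1) (hh : ν ≤ τ) :
    (wgeom ν a b - wharm ν a b) / (ν * (1 - ν))
      ≤ (wgeom τ a b - wharm τ a b) / (τ * (1 - τ)) := by
  have hb : 0 < b := ha.trans hab
  set s := Real.log (b / a) with hsdef
  have hba : 1 < b / a := (one_lt_div ha).mpr hab
  have hs : 0 < s := Real.log_pos hba
  have hexp : Real.exp (-s) = a / b := by
    rw [hsdef, show -Real.log (b / a) = Real.log ((b / a)⁻¹) from (Real.log_inv _).symm,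
      Real.exp_log (by positivity), inv_div]
  have hrw : ∀ t : ℝ, 0 < t → t < 1 →
      wgeom t a b - wharm t a b = a * (t * (1 - t)) * ∑' m : ℕ, SS s (m + 1) * t ^ m := by
    intro t ht0 ht1
    rw [wgeom_eq ha hb, wharm_eq ha hb ht0 ht1, ← hsdef]
    have hk := key hs ht0 ht1
    rw [hexp] at hk
    calc a * Real.exp (t * s) - a * (1 - t * (1 - a / b))⁻¹
        = a * (Real.exp (t * s) - (1 - t * (1 - a / b))⁻¹) := by ring
      _ = a * (t * (1 - t) * ∑' m : ℕ, SS s (m + 1) * t ^ m) := by rw [hk]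
      _ = a * (t * (1 - t)) * ∑' m : ℕ, SS s (m + 1) * t ^ m := by ring
  rw [hrw ν hν0 hν1, hrw τ hτ0 hτ1]
  have hν' : ν * (1 - ν) ≠ 0 := by
    have : (0:ℝ) < ν * (1 - ν) := by nlinarith
    exact this.ne'
  have hτ' : τ * (1 - τ) ≠ 0 := by
    have : (0:ℝ) < τ * (1 - τ) := by nlinarith
    exact this.ne'
  have hcancel : ∀ t G : ℝ, t * (1 - t) ≠ 0 → a * (t * (1 - t)) * G / (t * (1 - t)) = a * G := by
    intro t G htn
    rw [mul_right_comm]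
    exact mul_div_cancel_right₀ _ htn
  rw [hcancel ν _ hν', hcancel τ _ hτ']
  apply mul_le_mul_of_nonneg_left _ ha.le
  apply (summable_G hs hν0.le hν1).tsum_le_tsum _ (summable_G hs hτ0.le hτ1)
  intro m
  exact mul_le_mul_of_nonneg_left (pow_le_pow_left₀ hν0.le hh m) (SS_nonneg hs _)

lemma wgeom_symm (t a b : ℝ) : wgeom (1 - t) b a = wgeom t a b := by
  unfold wgeom
  rw [sub_sub_cancel]
  ring

lemma wharm_symm (t a b : ℝ) : wharm (1 - t) b a = wharm t a b := by
  unfold wharm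
  rw [sub_sub_cancel]
  congr 1
  ring

end Stmt13Aux

open Stmt13Aux in
theorem stmt_13 (a b ν τ : ℝ) (ha : 0 < a) (hb : 0 < b)
    (hν : ν ∈ Set.Ioo (0 : ℝ) 1) (hτ : τ ∈ Set.Ioo (0 : ℝ) 1)
    (h : (τ - ν) * (b - a) > 0) :
    (wgeom ν a b - wharm ν a b) / (ν * (1 - ν))
      ≤ (wgeom τ a b - wharm τ a b) / (τ * (1 - τ)) := by
  obtain ⟨hν0, hν1⟩ := hν
  obtain ⟨hτ0, hτ1⟩ := hτ
  rcases lt_trichotomy a b with hab | hab | hab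
  · have hντ : ν ≤ τ := by nlinarith
    exact main_lt ha hab hν0 hν1 hτ0 hτ1 hντ
  · exfalso
    rw [hab] at h
    simp at h
  · have hντ : τ ≤ ν := by nlinarith
    have hmain := main_lt hb hab (by linarith : (0:ℝ) < 1 - ν) (by linarith : (1:ℝ) - ν < 1)
      (by linarith : (0:ℝ) < 1 - τ) (by linarith : (1:ℝ) - τ < 1)
      (by linarith : (1:ℝ) - ν ≤ 1 - τ)
    rw [wgeom_symm, wharm_symm, wgeom_symm, wharm_symm] at hmain
    have e1 : (1 - τ) * (1 - (1 - τ)) = τ * (1 - τ) := by ring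
    have e2 : (1 - ν) * (1 - (1 - ν)) = ν * (1 - ν) := by ring
    rw [e1, e2] at hmain
    exact hmain
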